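/- For all n ≥ 1, the number of frequency congruent partitions of n equals the number of partitions of n into perfect squares. -/
import Mathlib


/-- A multiset of parts is frequency congruent: every positive integer `i`
divides the multiplicity of `i` as a part. -/
def IsFreqCong (s : Multiset ℕ) : Prop :=
  ∀ i : ℕ, 0 < i → i ∣ s.count i

/-- All parts are perfect squares of positive integers. -/
def AllSquares (s : Multiset ℕ) : Prop :=
  ∀ x ∈ s, ∃ m : ℕ, 0 < m ∧ x = m * m

namespace FreqSq

/-- Forward map on multisets: each value `i`, occurring `m_i` times, contributes
`m_i / i` copies of `i * i`. -/
def F (s : Multiset ℕ) : Multiset ℕ :=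
  ∑ i ∈ s.toFinset, Multiset.replicate (s.count i / i) (i * i)

/-- Inverse map: each square `x = m*m`, occurring `c` times, contributes
`m * c` copies of `m`. -/
def G (t : Multiset ℕ) : Multiset ℕ :=
  ∑ x ∈ t.toFinset, Multiset.replicate (Nat.sqrt x * t.count x) (Nat.sqrt x)

lemma mem_F {s : Multiset ℕ} {j : ℕ} (h : j ∈ F s) :
    ∃ i ∈ s, j = i * i := by
  unfold F at h
  have := Multiset.count_pos.2 h
  rw [Multiset.count_sum'] at this
  obtain ⟨i, hi, hne⟩ := Finset.exists_ne_zero_of_sum_ne_zero this.ne'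
  rw [Multiset.count_replicate] at hne
  split_ifs at hne with hji
  · exact ⟨i, Multiset.mem_toFinset.1 hi, hji.symm⟩
  · simp at hne

lemma mem_G {t : Multiset ℕ} {j : ℕ} (h : j ∈ G t) :
    ∃ x ∈ t, j = Nat.sqrt x ∧ 0 < Nat.sqrt x := by
  unfold G at h
  have := Multiset.count_pos.2 h
  rw [Multiset.count_sum'] at this
  obtain ⟨x, hx, hne⟩ := Finset.exists_ne_zero_of_sum_ne_zero this.ne'
  rw [Multiset.count_replicate] at hne
  split_ifs at hne with hjx
  · refine ⟨x, Multiset.mem_toFinset.1 hx, hjx.symm, ?_⟩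
    rcases Nat.eq_zero_or_pos (Nat.sqrt x) with h0 | h0
    · simp [h0] at hne
    · exact h0
  · simp at hne

lemma count_F (s : Multiset ℕ) (k : ℕ) (hk : 0 < k) :
    (F s).count (k * k) = s.count k / k := by
  unfold F
  rw [Multiset.count_sum']
  rw [Finset.sum_eq_single k]
  · rw [Multiset.count_replicate, if_pos rfl]
  · intro i _ hne
    rw [Multiset.count_replicate, if_neg]
    intro hkk
    exact hne (Nat.mul_self_inj.1 hkk)
  · intro hk'
    rw [Multiset.count_replicate, if_pos rfl,
      Multiset.count_eq_zero.2 (fun h => hk' (Multiset.mem_toFinset.2 h)), Nat.zero_div]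

lemma count_G (t : Multiset ℕ) (ht : AllSquares t) (k : ℕ) (hk : 0 < k) :
    (G t).count k = k * t.count (k * k) := by
  unfold G
  rw [Multiset.count_sum']
  rw [Finset.sum_eq_single (k * k)]
  · rw [Multiset.count_replicate, Nat.sqrt_eq k, if_pos rfl]
  · intro x hx hne
    obtain ⟨m, hm, rfl⟩ := ht x (Multiset.mem_toFinset.1 hx)
    rw [Multiset.count_replicate, Nat.sqrt_eq m, if_neg]
    rintro rfl
    exact hne rfl
  · intro hk'
    rw [Multiset.count_replicate, Nat.sqrt_eq k, if_pos rfl,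
      Multiset.count_eq_zero.2 (fun h => hk' (Multiset.mem_toFinset.2 h)), Nat.mul_zero]

lemma sum_F (s : Multiset ℕ) (hpos : ∀ x ∈ s, 0 < x) (hfc : IsFreqCong s) :
    (F s).sum = s.sum := by
  unfold F
  rw [Multiset.sum_sum]
  have h1 : ∀ i ∈ s.toFinset,
      (Multiset.replicate (s.count i / i) (i * i)).sum = s.count i * i := by
    intro i hi
    have hipos := hpos i (Multiset.mem_toFinset.1 hi)
    rw [Multiset.sum_replicate, smul_eq_mul, ← Nat.mul_assoc,
      Nat.div_mul_cancel (hfc i hipos)]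
  rw [Finset.sum_congr rfl h1]
  conv_rhs => rw [← Multiset.toFinset_sum_count_nsmul_eq s]
  rw [Multiset.sum_sum]
  refine Finset.sum_congr rfl fun i _ => ?_
  rw [Multiset.sum_nsmul, Multiset.sum_singleton, smul_eq_mul]

lemma sum_G (t : Multiset ℕ) (ht : AllSquares t) :
    (G t).sum = t.sum := by
  unfold G
  rw [Multiset.sum_sum]
  have h1 : ∀ x ∈ t.toFinset,
      (Multiset.replicate (Nat.sqrt x * t.count x) (Nat.sqrt x)).sum = t.count x * x := by
    intro x hx
    obtain ⟨m, hm, rfl⟩ := ht x (Multiset.mem_toFinset.1 hx)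
    rw [Multiset.sum_replicate, smul_eq_mul, Nat.sqrt_eq m]
    ring
  rw [Finset.sum_congr rfl h1]
  conv_rhs => rw [← Multiset.toFinset_sum_count_nsmul_eq t]
  rw [Multiset.sum_sum]
  refine Finset.sum_congr rfl fun i _ => ?_
  rw [Multiset.sum_nsmul, Multiset.sum_singleton, smul_eq_mul]

lemma allSquares_F (s : Multiset ℕ) (hpos : ∀ x ∈ s, 0 < x) : AllSquares (F s) := by
  intro j hj
  obtain ⟨i, hi, rfl⟩ := mem_F hj
  exact ⟨i, hpos i hi, rfl⟩

lemma pos_F (s : Multiset ℕ) (hpos : ∀ x ∈ s, 0 < x) : ∀ j ∈ F s, 0 < j := by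
  intro j hj
  obtain ⟨i, hi, rfl⟩ := mem_F hj
  exact Nat.mul_pos (hpos i hi) (hpos i hi)

lemma pos_G (t : Multiset ℕ) : ∀ j ∈ G t, 0 < j := by
  intro j hj
  obtain ⟨x, _, rfl, hx⟩ := mem_G hj
  exact hx

lemma freqCong_G (t : Multiset ℕ) (ht : AllSquares t) : IsFreqCong (G t) := by
  intro i hi
  rw [count_G t ht i hi]
  exact Dvd.intro _ rfl

lemma G_F (s : Multiset ℕ) (hpos : ∀ x ∈ s, 0 < x) (hfc : IsFreqCong s) :
    G (F s) = s := by
  ext a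
  rcases Nat.eq_zero_or_pos a with rfl | ha
  · rw [Multiset.count_eq_zero.2 (fun h => by exact absurd (pos_G _ 0 h) (lt_irrefl 0)),
      Multiset.count_eq_zero.2 (fun h => by exact absurd (hpos 0 h) (lt_irrefl 0))]
  · rw [count_G (F s) (allSquares_F s hpos) a ha, count_F s a ha,
      Nat.mul_div_cancel' (hfc a ha)]

lemma F_G (t : Multiset ℕ) (ht : AllSquares t) : F (G t) = t := by
  ext j
  by_cases hsq : ∃ k : ℕ, 0 < k ∧ j = k * k
  · obtain ⟨k, hk, rfl⟩ := hsq
    rw [count_F (G t) k hk, count_G t ht k hk, Nat.mul_div_cancel_left _ hk]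
  · rw [Multiset.count_eq_zero.2, Multiset.count_eq_zero.2]
    · intro hj
      exact hsq (ht j hj)
    · intro hj
      obtain ⟨i, hi, rfl⟩ := mem_F hj
      exact hsq ⟨i, pos_G t i hi, rfl⟩

end FreqSq

open FreqSq in
theorem freq_cong_eq_squares (n : ℕ) (hn : 1 ≤ n) :
    {p : n.Partition | IsFreqCong p.parts}.ncard
      = {p : n.Partition | AllSquares p.parts}.ncard := by
  rw [← Nat.card_coe_set_eq, ← Nat.card_coe_set_eq]
  refine Nat.card_congr ?_
  refine
    { toFun := fun p =>
        ⟨⟨F p.1.parts, fun {j} hj => pos_F _ (fun x hx => p.1.parts_pos hx) j hj,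
          by rw [sum_F _ (fun x hx => p.1.parts_pos hx) p.2, p.1.parts_sum]⟩,
          allSquares_F _ (fun x hx => p.1.parts_pos hx)⟩
      invFun := fun q =>
        ⟨⟨G q.1.parts, fun {j} hj => pos_G _ j hj,
          by rw [sum_G _ q.2, q.1.parts_sum]⟩,
          freqCong_G _ q.2⟩
      left_inv := ?_
      right_inv := ?_ }
  · intro p
    apply Subtype.ext
    apply Nat.Partition.ext
    exact G_F p.1.parts (fun x hx => p.1.parts_pos hx) p.2
  · intro q
    apply Subtype.ext
    apply Nat.Partition.ext
    exact F_G q.1.parts q.2
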